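/- Let k ≥ 3, let P ⊆ S² be a set of k points in general position, P̂ = P ∪ (−P), and let p ∈ P. Let W be a 2-dimensional linear subspace with p ∈ W such that W ∩ P̂ = {p, −p}. Then the number of edges {a,b} of P̂ with a, b ∉ {p, −p} whose arc arc(a,b) meets the great circle W ∩ S² equals (k−1)(k−2). -/

import Mathlib

open Set
open scoped RealInnerProductSpace

noncomputable section

/-- Three-dimensional Euclidean space. -/
abbrev E3 : Type := EuclideanSpace ℝ (Fin 3)

/-- The unit sphere `S²` in `ℝ³`. -/
def unitSphere : Set E3 := {x | ‖x‖ = 1}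

/-- The geodesic arc from `p` to `q`: the radial projection onto the sphere of the
straight segment from `p` to `q`. -/
def arc (p q : E3) : Set E3 :=
  {x | ∃ t ∈ Icc (0 : ℝ) 1, x = ‖(1 - t) • p + t • q‖⁻¹ • ((1 - t) • p + t • q)}

/-- The half-circle with endpoints `p` and `-p` determined by a direction `v`. -/
def halfCircle (p v : E3) : Set E3 :=
  {x | ∃ t ∈ Icc (0 : ℝ) Real.pi, x = Real.cos t • p + Real.sin t • v}

/-- A set of points is in general position if every three distinct points of it are
linearly independent. -/
def GenPos (P : Set E3) : Prop :=
  ∀ a ∈ P, ∀ b ∈ P, ∀ c ∈ P, a ≠ b → a ≠ c → b ≠ c → LinearIndependent ℝ ![a, b, c]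

/-- `P̂ = P ∪ (-P)`: the set `P` together with the antipodes of its points. -/
def phat (P : Set E3) : Set E3 := P ∪ (fun x => -x) '' P

/-- The edges of a vertex set `V`: unordered pairs `{a, b}` of points of `V`
with `b ∉ {a, -a}`. -/
def edges (V : Set E3) : Set (Sym2 E3) :=
  {e | ∃ a b, a ∈ V ∧ b ∈ V ∧ b ≠ a ∧ b ≠ -a ∧ e = s(a, b)}

/-- A curve of a drawing: a subset of the sphere together with its set of endpoints. -/
abbrev Curve : Type := Set E3 × Set E3

/-- The curves of the drawing determined by `P`: the geodesic arcs `arc a b` for all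
edges `{a, b}` of `P̂`, together with the half-circles `halfCircle p (v p)` joining
`p` and `-p` for `p ∈ P'`. -/
def drawingCurves (P : Set E3) (v : E3 → E3) (P' : Set E3) : Set Curve :=
  {c | (∃ a b, a ∈ phat P ∧ b ∈ phat P ∧ b ≠ a ∧ b ≠ -a ∧
          c = (arc a b, ({a, b} : Set E3))) ∨
       (∃ p ∈ P', c = (halfCircle p (v p), ({p, -p} : Set E3)))}

/-- The crossing pairs of a drawing: unordered pairs of distinct curves sharing a point
that is not an endpoint of either curve. -/
def crossingPairs (D : Set Curve) : Set (Sym2 Curve) :=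
  {pr | ∃ c ∈ D, ∃ d ∈ D, c ≠ d ∧
    (∃ x, x ∈ c.1 ∧ x ∈ d.1 ∧ x ∉ c.2 ∧ x ∉ d.2) ∧ pr = s(c, d)}

/-- Hill's number `H(n)` as a rational number. -/
def Hfun (n : ℕ) : ℚ :=
  (1 / 4 : ℚ) * ((n / 2 : ℕ) : ℚ) * (((n - 1) / 2 : ℕ) : ℚ) *
    (((n - 2) / 2 : ℕ) : ℚ) * (((n - 3) / 2 : ℕ) : ℚ)


theorem count_edges_meeting_great_circle
    (k : ℕ) (hk : 3 ≤ k) (P : Set E3) (hPS : P ⊆ unitSphere)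
    (hPfin : P.Finite) (hcard : P.ncard = k) (hgen : GenPos P)
    (p : E3) (hp : p ∈ P)
    (W : Submodule ℝ E3) (hW : Module.finrank ℝ W = 2) (hpW : p ∈ W)
    (hWP : (W : Set E3) ∩ phat P = ({p, -p} : Set E3)) :
    Set.ncard {e : Sym2 E3 | ∃ a b, a ∈ phat P ∧ b ∈ phat P ∧ b ≠ a ∧ b ≠ -a ∧
        a ∉ ({p, -p} : Set E3) ∧ b ∉ ({p, -p} : Set E3) ∧
        (arc a b ∩ ((W : Set E3) ∩ unitSphere)).Nonempty ∧ e = s(a, b)} =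
      (k - 1) * (k - 2) := by
  classical
  have hE3 : Module.finrank ℝ E3 = 3 := finrank_euclideanSpace_fin
  -- find a normal vector n with W = (ℝ ∙ n)ᗮ
  have hbot : Wᗮ ≠ ⊥ := by
    intro h
    have h2 := Submodule.finrank_add_finrank_orthogonal W
    rw [h, hW, hE3] at h2
    simp at h2
  obtain ⟨n, hnW, hn0⟩ := Submodule.exists_mem_ne_zero_of_ne_bot hbot
  have hWeq : W = (ℝ ∙ n)ᗮ := by
    have hle : W ≤ (ℝ ∙ n)ᗮ := by
      intro w hw
      rw [Submodule.mem_orthogonal_singleton_iff_inner_right]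
      rw [real_inner_comm]
      exact (Submodule.mem_orthogonal W n).mp hnW w hw
    refine Submodule.eq_of_le_of_finrank_eq hle ?_
    have h1 := Submodule.finrank_add_finrank_orthogonal (ℝ ∙ n)
    rw [finrank_span_singleton hn0, hE3] at h1
    omega
  set f : E3 → ℝ := fun x => ⟪n, x⟫ with hf
  have hfW : ∀ x : E3, x ∈ W ↔ f x = 0 := by
    intro x
    rw [hWeq, Submodule.mem_orthogonal_singleton_iff_inner_right]
  have hfcomb : ∀ (s t : ℝ) (a b : E3), f (s • a + t • b) = s * f a + t * f b := by
    intro s t a b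
    show ⟪n, s • a + t • b⟫ = s * ⟪n, a⟫ + t * ⟪n, b⟫
    rw [inner_add_right, real_inner_smul_right, real_inner_smul_right]
  have hfsmul : ∀ (s : ℝ) (a : E3), f (s • a) = s * f a := by
    intro s a
    show ⟪n, s • a⟫ = s * ⟪n, a⟫
    rw [real_inner_smul_right]
  have hfneg : ∀ a : E3, f (-a) = - f a := by
    intro a
    show ⟪n, -a⟫ = -⟪n, a⟫
    rw [inner_neg_right]
  set Q : Set E3 := phat P with hQ
  have hQfin : Q.Finite := hPfin.union (hPfin.image _)
  have hQS : ∀ a ∈ Q, ‖a‖ = 1 := by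
    rintro a (ha | ⟨q, hq, rfl⟩)
    · exact hPS ha
    · have hq1 : ‖q‖ = 1 := hPS hq
      simpa using hq1
  have hQneg : ∀ a ∈ Q, -a ∈ Q := by
    rintro a (ha | ⟨q, hq, rfl⟩)
    · exact Or.inr ⟨a, ha, rfl⟩
    · exact Or.inl (by simpa using hq)
  -- no antipodal pairs inside P
  have hPnP : ∀ q ∈ P, ∀ r ∈ P, r ≠ -q := by
    intro q hq r hr hrq
    have hq0 : q ≠ 0 := by
      intro h
      have h2 : ‖q‖ = 1 := hPS hq
      rw [h] at h2
      simp at h2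
    have hqr : q ≠ r := by
      intro h
      rw [← h] at hrq
      apply hq0
      have h1 : q + q = 0 := add_eq_zero_iff_eq_neg.mpr hrq
      have h2 : (2 : ℝ) • q = 0 := by rw [two_smul]; exact h1
      simpa using (smul_eq_zero.mp h2).resolve_left (by norm_num)
    have hex : (P \ {q, r}).Nonempty := by
      rw [Set.nonempty_iff_ne_empty]
      intro h
      have hsub : P ⊆ {q, r} := by
        intro x hx
        by_contra hx2
        exact (Set.eq_empty_iff_forall_notMem.mp h) x ⟨hx, hx2⟩
      have h1 := Set.ncard_le_ncard hsub ((Set.finite_singleton r).insert q)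
      have h2 : ({q, r} : Set E3).ncard ≤ 2 :=
        (Set.ncard_insert_le _ _).trans (by simp)
      omega
    obtain ⟨c, hcP, hc⟩ := hex
    have hcq : q ≠ c := fun h => hc (by simp [h])
    have hcr : r ≠ c := fun h => hc (by simp [h])
    have hli := hgen q hq r hr c hcP hqr hcq hcr
    have := Fintype.linearIndependent_iff.mp hli ![1, 1, 0] ?_ 0
    · simpa using this
    · simp [Fin.sum_univ_three, hrq]
  have hfp : f p = 0 := (hfW p).mp hpW
  have hfnp : f (-p) = 0 := by rw [hfneg, hfp, neg_zero]
  have hfne : ∀ a ∈ Q, a ∉ ({p, -p} : Set E3) → f a ≠ 0 := by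
    intro a haQ hamem hfa
    exact hamem (hWP ▸ (⟨(hfW a).mpr hfa, haQ⟩ : a ∈ (W : Set E3) ∩ phat P))
  have hfnotpm : ∀ a : E3, f a ≠ 0 → a ∉ ({p, -p} : Set E3) := by
    rintro a hfa (rfl | rfl)
    · exact hfa hfp
    · exact hfa hfnp
  -- the key geometric lemma
  have arcMeet : ∀ a b : E3, ‖a‖ = 1 → ‖b‖ = 1 → b ≠ -a → f a ≠ 0 → f b ≠ 0 →
      ((arc a b ∩ ((W : Set E3) ∩ unitSphere)).Nonempty ↔ f a * f b < 0) := by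
    intro a b ha hb hba hfa hfb
    constructor
    · rintro ⟨x, ⟨t, htI, rfl⟩, hxW, hxS⟩
      set y : E3 := (1 - t) • a + t • b with hy
      have hy0 : y ≠ 0 := by
        intro h
        have h2 : ‖‖y‖⁻¹ • y‖ = 1 := hxS
        rw [h] at h2
        simp at h2
      have hfx : f (‖y‖⁻¹ • y) = 0 := (hfW _).mp hxW
      rw [hfsmul] at hfx
      have hfy : f y = 0 := by
        rcases mul_eq_zero.mp hfx with h | h
        · exact absurd h (inv_ne_zero (norm_ne_zero_iff.mpr hy0))
        · exact h
      rw [hy, hfcomb] at hfy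
      have ht0 : t ≠ 0 := by
        intro h; rw [h] at hfy; simp at hfy; exact hfa hfy
      have ht1 : t ≠ 1 := by
        intro h; rw [h] at hfy; simp at hfy; exact hfb hfy
      have h0 : 0 < t := lt_of_le_of_ne htI.1 (Ne.symm ht0)
      have h1 : t < 1 := lt_of_le_of_ne htI.2 ht1
      have hb2 : 0 < f b * f b := mul_self_pos.mpr hfb
      have key : ((1 - t) * f a + t * f b) * f b = 0 := by rw [hfy, zero_mul]
      nlinarith [key, mul_pos h0 hb2, sub_pos.mpr h1]
    · intro hab
      set t : ℝ := f a / (f a - f b) with ht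
      have hne : f a - f b ≠ 0 := by
        rcases mul_neg_iff.mp hab with ⟨h1, h2⟩ | ⟨h1, h2⟩ <;> intro h <;> linarith
      have h0 : 0 < t ∧ t < 1 := by
        rcases mul_neg_iff.mp hab with ⟨h1, h2⟩ | ⟨h1, h2⟩
        · constructor
          · exact div_pos h1 (by linarith)
          · rw [div_lt_one (by linarith)]; linarith
        · have e : t = (-f a) / (-(f a - f b)) := by rw [ht, neg_div_neg_eq]
          constructor
          · rw [e]; exact div_pos (by linarith) (by linarith)
          · rw [e, div_lt_one (by linarith)]; linarith
      set y : E3 := (1 - t) • a + t • b with hy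
      have hfy : f y = 0 := by
        rw [hy, hfcomb, ht]
        field_simp
        ring
      have hy0 : y ≠ 0 := by
        intro h
        have hnorm : ‖(1 - t) • a‖ = ‖t • b‖ := by
          have : (1 - t) • a = -(t • b) := by
            have := h
            rw [hy] at this
            linear_combination (norm := module) this
          rw [this, norm_neg]
        rw [norm_smul, norm_smul, ha, hb] at hnorm
        simp only [mul_one, Real.norm_eq_abs] at hnorm
        rw [abs_of_pos (by linarith [h0.2]), abs_of_pos h0.1] at hnorm
        have ht2 : t = 1 / 2 := by linarith
        apply hba
        have h2 : (1 / 2 : ℝ) • a + (1 / 2 : ℝ) • b = 0 := by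
          rw [hy, ht2] at h
          convert h using 2 <;> norm_num
        have : b = -a := by
          have h3 : (1 / 2 : ℝ) • (a + b) = 0 := by
            rw [smul_add]; exact h2
          have h4 : a + b = 0 := by
            simpa using (smul_eq_zero.mp h3).resolve_left (by norm_num)
          linear_combination (norm := module) h4
        exact this
      refine ⟨‖y‖⁻¹ • y, ⟨t, ⟨le_of_lt h0.1, le_of_lt h0.2⟩, rfl⟩, ?_, ?_⟩
      · rw [SetLike.mem_coe, hfW, hfsmul, hfy, mul_zero]
      · show ‖y‖⁻¹ • y ∈ unitSphere
        show ‖‖y‖⁻¹ • y‖ = 1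
        rw [norm_smul, norm_inv, norm_norm]
        exact inv_mul_cancel₀ (norm_ne_zero_iff.mpr hy0)
  -- the positive and negative sides
  set A : Set E3 := {a | a ∈ Q ∧ 0 < f a} with hA
  set B : Set E3 := {a | a ∈ Q ∧ f a < 0} with hB
  have hAfin : A.Finite := hQfin.subset (fun a ha => ha.1)
  have hBfin : B.Finite := hQfin.subset (fun a ha => ha.1)
  -- |A| = k - 1
  set g : E3 → E3 := fun q => if 0 < f q then q else -q with hg
  have hPQf : ∀ q ∈ P, q ≠ p → f q ≠ 0 := by
    intro q hq hqp
    refine hfne q (Or.inl hq) ?_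
    rintro (rfl | h)
    · exact hqp rfl
    · exact hPnP p hp q hq h
  have hAimg : A = g '' (P \ {p}) := by
    ext a
    constructor
    · rintro ⟨(haP | ⟨q, hqP, rfl⟩), hpos⟩
      · refine ⟨a, ⟨haP, ?_⟩, ?_⟩
        · intro h; rw [h, hfp] at hpos; exact lt_irrefl 0 hpos
        · simp [hg, hpos]
      · refine ⟨q, ⟨hqP, ?_⟩, ?_⟩
        · intro h
          rw [h, hfneg, hfp] at hpos; simp at hpos
        · rw [hfneg] at hpos
          have : ¬ (0 < f q) := by linarith
          simp [hg, this]
    · rintro ⟨q, ⟨hqP, hqp⟩, rfl⟩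
      have hfq := hPQf q hqP hqp
      by_cases hpos : 0 < f q
      · simp only [hg, if_pos hpos]
        exact ⟨Or.inl hqP, hpos⟩
      · simp only [hg, if_neg hpos]
        refine ⟨Or.inr ⟨q, hqP, rfl⟩, ?_⟩
        rw [hfneg]
        rcases lt_or_gt_of_ne hfq with h | h
        · linarith
        · exact absurd h hpos
  have hginj : Set.InjOn g (P \ {p}) := by
    intro x ⟨hxP, _⟩ y ⟨hyP, _⟩ hxy
    simp only [hg] at hxy
    split_ifs at hxy with h1 h2 h2
    · exact hxy
    · exact absurd hxy (hPnP y hyP x hxP)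
    · exact absurd hxy.symm (hPnP x hxP y hyP)
    · exact neg_inj.mp hxy
  have hAcard : A.ncard = k - 1 := by
    rw [hAimg, Set.ncard_image_of_injOn hginj,
      Set.ncard_diff_singleton_of_mem hp, hcard]
  have hABneg : B = (fun a => -a) '' A := by
    ext b
    constructor
    · rintro ⟨hbQ, hneg⟩
      refine ⟨-b, ⟨hQneg b hbQ, ?_⟩, by simp⟩
      rw [hfneg]; linarith
    · rintro ⟨a, ⟨haQ, hpos⟩, rfl⟩
      exact ⟨hQneg a haQ, by rw [hfneg]; linarith⟩
  have hBcard : B.ncard = k - 1 := by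
    rw [hABneg, Set.ncard_image_of_injective _ neg_injective, hAcard]
  -- the set in question as an image
  set T : Set (E3 × E3) := (A ×ˢ B) \ {x : E3 × E3 | x.2 = -x.1} with hT
  have hSeq : {e : Sym2 E3 | ∃ a b, a ∈ phat P ∧ b ∈ phat P ∧ b ≠ a ∧ b ≠ -a ∧
        a ∉ ({p, -p} : Set E3) ∧ b ∉ ({p, -p} : Set E3) ∧
        (arc a b ∩ ((W : Set E3) ∩ unitSphere)).Nonempty ∧ e = s(a, b)} =
      (fun x : E3 × E3 => s(x.1, x.2)) '' T := by
    ext e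
    constructor
    · rintro ⟨a, b, haQ, hbQ, hba, hbna, hap, hbp, hmeet, rfl⟩
      have hfa := hfne a haQ hap
      have hfb := hfne b hbQ hbp
      have hlt := (arcMeet a b (hQS a haQ) (hQS b hbQ) hbna hfa hfb).mp hmeet
      rcases mul_neg_iff.mp hlt with ⟨h1, h2⟩ | ⟨h1, h2⟩
      · exact ⟨(a, b), ⟨⟨⟨haQ, h1⟩, ⟨hbQ, h2⟩⟩, hbna⟩, rfl⟩
      · refine ⟨(b, a), ⟨⟨⟨hbQ, h2⟩, ⟨haQ, h1⟩⟩, ?_⟩, Sym2.eq_swap⟩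
        intro h
        apply hbna
        have h2 : a = -b := h
        rw [h2, neg_neg]
    · rintro ⟨⟨a, b⟩, ⟨⟨⟨haQ, h1⟩, ⟨hbQ, h2⟩⟩, hne⟩, rfl⟩
      have hba : b ≠ a := by intro h; rw [h] at h2; linarith
      have hfa : f a ≠ 0 := ne_of_gt h1
      have hfb : f b ≠ 0 := ne_of_lt h2
      exact ⟨a, b, haQ, hbQ, hba, hne, hfnotpm a hfa, hfnotpm b hfb,
        (arcMeet a b (hQS a haQ) (hQS b hbQ) hne hfa hfb).mpr
          (mul_neg_of_pos_of_neg h1 h2), rfl⟩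
  have hinj : Set.InjOn (fun x : E3 × E3 => s(x.1, x.2)) T := by
    intro x hx y hy h
    obtain ⟨⟨⟨_, hx1⟩, ⟨_, hx2⟩⟩, _⟩ := hx
    obtain ⟨⟨⟨_, hy1⟩, ⟨_, hy2⟩⟩, _⟩ := hy
    rcases Sym2.eq_iff.mp h with ⟨h1, h2⟩ | ⟨h1, h2⟩
    · exact Prod.ext_iff.mpr ⟨h1, h2⟩
    · exfalso; rw [h1] at hx1; linarith
  -- counting
  have hprodcard : (A ×ˢ B).ncard = (k - 1) * (k - 1) := by
    rw [← Nat.card_coe_set_eq, Nat.card_congr (Equiv.Set.prod A B),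
      Nat.card_prod, Nat.card_coe_set_eq, Nat.card_coe_set_eq,
      hAcard, hBcard]
  set D : Set (E3 × E3) := (A ×ˢ B) ∩ {x : E3 × E3 | x.2 = -x.1} with hD
  have hDeq : D = (fun a => (a, -a)) '' A := by
    ext ⟨x1, x2⟩
    constructor
    · rintro ⟨⟨h1, h2⟩, h3⟩
      exact ⟨x1, h1, by rw [show x2 = -x1 from h3]⟩
    · rintro ⟨a, haA, h⟩
      rw [← h]
      refine ⟨⟨haA, ?_⟩, rfl⟩
      rw [hABneg]
      exact ⟨a, haA, rfl⟩
  have hDcard : D.ncard = k - 1 := by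
    rw [hDeq, Set.ncard_image_of_injective _ (fun a b h => (Prod.ext_iff.mp h).1), hAcard]
  have hTcard : T.ncard = (k - 1) * (k - 1) - (k - 1) := by
    have hTD : T = (A ×ˢ B) \ D := (Set.diff_self_inter).symm
    rw [hTD, Set.ncard_diff Set.inter_subset_left ((hAfin.prod hBfin).subset Set.inter_subset_left),
      hprodcard, hDcard]
  rw [hSeq, Set.ncard_image_of_injOn hinj, hTcard]
  obtain ⟨j, rfl⟩ : ∃ j, k = j + 3 := ⟨k - 3, by omega⟩
  have h : (j + 3 - 1) * (j + 3 - 1) = (j + 3 - 1) * (j + 3 - 2) + (j + 3 - 1) := by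
    have e1 : j + 3 - 1 = j + 2 := by omega
    have e2 : j + 3 - 2 = j + 1 := by omega
    rw [e1, e2]
    ring
  omega


end
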